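/- (Gyöngy–Krylov criterion) Let X be a Polish space and (x_n)_{n≥0} a sequence of X-valued random variables on a probability space. Suppose that for every pair of subsequences (x_{n_k}) and (x_{m_k}), the sequence of joint laws of (x_{n_k}, x_{m_k}) on X × X has a further subsequence converging weakly to a probability measure ν with ν({(x,y) ∈ X × X : x = y}) = 1. Then (x_n) converges in probability to some X-valued random variable. -/

import Mathlib

open MeasureTheory Filter

namespace GKaux

variable {X : Type*} [MetricSpace X]

noncomputable def cut (ε : ℝ) : BoundedContinuousFunction (X × X) ℝ :=
  BoundedContinuousFunction.mkOfBound
    ⟨fun q => min 1 (max 0 (2 * dist q.1 q.2 / ε - 1)), by fun_prop⟩ 1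
    (by
      intro a b
      simp only [ContinuousMap.coe_mk]
      have h1 : (0:ℝ) ≤ min 1 (max 0 (2 * dist a.1 a.2 / ε - 1)) :=
        le_min zero_le_one (le_max_left _ _)
      have h2 : min 1 (max 0 (2 * dist a.1 a.2 / ε - 1)) ≤ 1 := min_le_left _ _
      have h3 : (0:ℝ) ≤ min 1 (max 0 (2 * dist b.1 b.2 / ε - 1)) :=
        le_min zero_le_one (le_max_left _ _)
      have h4 : min 1 (max 0 (2 * dist b.1 b.2 / ε - 1)) ≤ 1 := min_le_left _ _
      rw [Real.dist_eq, abs_sub_le_iff]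
      constructor <;> linarith)

lemma cut_apply (ε : ℝ) (q : X × X) :
    cut ε q = min 1 (max 0 (2 * dist q.1 q.2 / ε - 1)) := rfl

lemma cut_nonneg (ε : ℝ) (q : X × X) : 0 ≤ cut ε q := by
  rw [cut_apply]; exact le_min zero_le_one (le_max_left _ _)

lemma cut_le_one (ε : ℝ) (q : X × X) : cut ε q ≤ 1 := by
  rw [cut_apply]; exact min_le_left _ _

lemma cut_eq_one (ε : ℝ) (hε : 0 < ε) {q : X × X} (h : ε ≤ dist q.1 q.2) :
    cut ε q = 1 := by
  have h1 : (1:ℝ) ≤ 2 * dist q.1 q.2 / ε - 1 := by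
    rw [le_sub_iff_add_le, le_div_iff₀ hε]
    linarith
  rw [cut_apply, max_eq_right (le_trans zero_le_one h1), min_eq_left h1]

lemma cut_eq_zero (ε : ℝ) {q : X × X} (h : q.1 = q.2) : cut ε q = 0 := by
  rw [cut_apply, h, dist_self]
  norm_num

/-- Step 1 of the Gyöngy–Krylov argument: the sequence is Cauchy in probability. -/
lemma key
    {Ω : Type*} [MeasurableSpace Ω] (P : Measure Ω) [IsProbabilityMeasure P]
    [TopologicalSpace.SeparableSpace X] [MeasurableSpace X] [BorelSpace X]
    (x : ℕ → Ω → X) (hx : ∀ n, Measurable (x n))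
    (h : ∀ n m : ℕ → ℕ, StrictMono n → StrictMono m →
      ∃ (k : ℕ → ℕ) (ν : Measure (X × X)), StrictMono k ∧ IsProbabilityMeasure ν ∧
        (∀ g : BoundedContinuousFunction (X × X) ℝ,
          Tendsto (fun j => ∫ ω, g (x (n (k j)) ω, x (m (k j)) ω) ∂P) atTop
            (nhds (∫ q, g q ∂ν))) ∧
        ν {q : X × X | q.1 = q.2} = 1) :
    ∀ ε : ℝ, 0 < ε → ∀ δ : ENNReal, δ ≠ 0 →
      ∃ N, ∀ p, N ≤ p → ∀ q, N ≤ q → P {ω | ε < dist (x p ω) (x q ω)} < δ := by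
  haveI : SecondCountableTopology X := UniformSpace.secondCountable_of_separable X
  intro ε hε δ hδ
  by_contra hcon
  push_neg at hcon
  choose p hp q hq hPd using hcon
  set Nseq : ℕ → ℕ := fun k => Nat.rec 0 (fun _ Nk => max (p Nk) (q Nk) + 1) k with hNseq
  have hNsucc : ∀ k, Nseq (k + 1) = max (p (Nseq k)) (q (Nseq k)) + 1 := fun k => rfl
  set n : ℕ → ℕ := fun k => p (Nseq k) with hn_def
  set m : ℕ → ℕ := fun k => q (Nseq k) with hm_def
  have hn : StrictMono n := by
    apply strictMono_nat_of_lt_succ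
    intro k
    calc n k < Nseq (k + 1) := by rw [hNsucc]; exact Nat.lt_succ_of_le (le_max_left _ _)
      _ ≤ n (k + 1) := hp _
  have hm : StrictMono m := by
    apply strictMono_nat_of_lt_succ
    intro k
    calc m k < Nseq (k + 1) := by rw [hNsucc]; exact Nat.lt_succ_of_le (le_max_right _ _)
      _ ≤ m (k + 1) := hq _
  obtain ⟨k, ν, hk, hν, htend, hdiag⟩ := h n m hn hm
  haveI := hν
  have hDm : MeasurableSet {q : X × X | q.1 = q.2} := by
    have hset : {q : X × X | q.1 = q.2} = (fun q : X × X => dist q.1 q.2) ⁻¹' {0} := by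
      ext q; simp [dist_eq_zero]
    rw [hset]
    exact (continuous_fst.dist continuous_snd).measurable (measurableSet_singleton 0)
  have hae : ∀ᵐ q ∂ν, q.1 = q.2 := by
    rw [ae_iff]
    have : {q : X × X | ¬ q.1 = q.2} = {q : X × X | q.1 = q.2}ᶜ := rfl
    rw [this, measure_compl hDm (by simp [hdiag]), hdiag, measure_univ, tsub_self]
  have hint0 : ∫ q, cut (X := X) ε q ∂ν = 0 :=
    integral_eq_zero_of_ae (hae.mono fun q hq => cut_eq_zero ε hq)
  have ht := htend (cut ε)
  rw [hint0] at ht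
  set δ0 := min δ 1 with hδ0
  have hδ0top : δ0 ≠ ⊤ := ((min_le_right δ 1).trans_lt ENNReal.one_lt_top).ne
  have hδ0pos : 0 < δ0.toReal :=
    ENNReal.toReal_pos (lt_min (pos_iff_ne_zero.mpr hδ) one_pos).ne' hδ0top
  obtain ⟨j, hj⟩ := (ht.eventually_lt_const hδ0pos).exists
  set a := n (k j) with ha
  set b := m (k j) with hb
  set S := {ω | ε < dist (x a ω) (x b ω)} with hS_def
  have hS : MeasurableSet S :=
    measurableSet_lt measurable_const ((hx a).dist (hx b))
  have hle1 : δ0.toReal ≤ (P S).toReal := by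
    apply ENNReal.toReal_mono (measure_ne_top P _)
    exact le_trans (min_le_left _ _) (hPd (Nseq (k j)))
  have hle2 : (P S).toReal ≤ ∫ ω, cut ε (x a ω, x b ω) ∂P := by
    rw [← measureReal_def, ← integral_indicator_one hS]
    apply integral_mono
    · exact (integrable_const (1:ℝ)).indicator hS
    · refine ⟨((cut (X := X) ε).continuous.measurable.comp
        ((hx a).prodMk (hx b))).aestronglyMeasurable,
        HasFiniteIntegral.of_bounded (C := 1) (ae_of_all _ fun ω => ?_)⟩
      rw [Real.norm_eq_abs, abs_le]
      exact ⟨by linarith [cut_nonneg (X := X) ε (x a ω, x b ω)], cut_le_one ε _⟩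
    · intro ω
      by_cases hω : ω ∈ S
      · rw [Set.indicator_of_mem hω]
        exact (cut_eq_one ε hε (le_of_lt hω)).ge
      · rw [Set.indicator_of_notMem hω]
        exact cut_nonneg ε _
  have := hj
  linarith

end GKaux

/-- Gyöngy–Krylov criterion for convergence in probability: if every pair of
subsequences of `(x_n)` admits a further subsequence along which the joint laws
converge weakly (i.e. against bounded continuous functions) to a probability
measure concentrated on the diagonal, then `(x_n)` converges in probability. -/
theorem gyongy_krylov_criterion
    {Ω : Type*} [MeasurableSpace Ω] (P : Measure Ω) [IsProbabilityMeasure P]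
    {X : Type*} [MetricSpace X] [CompleteSpace X] [TopologicalSpace.SeparableSpace X]
    [MeasurableSpace X] [BorelSpace X]
    (x : ℕ → Ω → X) (hx : ∀ n, Measurable (x n))
    (h : ∀ n m : ℕ → ℕ, StrictMono n → StrictMono m →
      ∃ (k : ℕ → ℕ) (ν : Measure (X × X)), StrictMono k ∧ IsProbabilityMeasure ν ∧
        (∀ g : BoundedContinuousFunction (X × X) ℝ,
          Tendsto (fun j => ∫ ω, g (x (n (k j)) ω, x (m (k j)) ω) ∂P) atTop
            (nhds (∫ q, g q ∂ν))) ∧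
        ν {q : X × X | q.1 = q.2} = 1) :
    ∃ y : Ω → X, Measurable y ∧
      ∀ ε : ℝ, 0 < ε →
        Tendsto (fun n => P {ω | ε < dist (x n ω) (y ω)}) atTop (nhds 0) := by
  classical
  haveI : SecondCountableTopology X := UniformSpace.secondCountable_of_separable X
  have key := GKaux.key P x hx h
  -- choose a rapidly Cauchy-in-probability subsequence
  have h2 : ∀ k : ℕ, ∃ N, ∀ p, N ≤ p → ∀ q, N ≤ q →
      P {ω | (1/2:ℝ)^(k+1) < dist (x p ω) (x q ω)} < (2⁻¹ : ENNReal)^k :=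
    fun k => key ((1/2)^(k+1)) (by positivity) _ (pow_ne_zero k (by simp))
  choose N hN using h2
  set n : ℕ → ℕ := fun k => Nat.rec (N 0) (fun k nk => max (nk + 1) (N (k+1))) k with hn_def
  have hnsucc : ∀ k, n (k+1) = max (n k + 1) (N (k+1)) := fun k => rfl
  have hnN : ∀ k, N k ≤ n k := by
    intro k
    cases k with
    | zero => exact le_refl _
    | succ k => rw [hnsucc]; exact le_max_right _ _
  have hmono : StrictMono n := strictMono_nat_of_lt_succ fun k => by
    rw [hnsucc]; exact lt_of_lt_of_le (Nat.lt_succ_self _) (le_max_left _ _)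
  set E : ℕ → Set Ω := fun k =>
    {ω | (1/2:ℝ)^(k+1) < dist (x (n k) ω) (x (n (k+1)) ω)} with hE_def
  have hE : ∀ k, P (E k) ≤ (2⁻¹ : ENNReal)^k := fun k =>
    le_of_lt (hN k (n k) (hnN k) (n (k+1)) (le_trans (hnN k) (hmono.monotone (Nat.le_succ k))))
  have hsum : (∑' k, P (E k)) ≠ ⊤ := by
    apply ne_top_of_le_ne_top _ (ENNReal.tsum_le_tsum hE)
    rw [ENNReal.tsum_geometric]
    simp [ENNReal.sub_half]
  have hae := MeasureTheory.ae_eventually_notMem hsum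
  -- the (measurable) set where the subsequence is Cauchy
  set A : Set Ω := ⋂ (i : ℕ), ⋃ (M : ℕ), ⋂ (p : ℕ) (_ : M ≤ p) (q : ℕ) (_ : M ≤ q),
    {ω | dist (x (n p) ω) (x (n q) ω) < 1/(i+1)} with hA_def
  have hAm : MeasurableSet A := by
    refine MeasurableSet.iInter fun i => MeasurableSet.iUnion fun M =>
      MeasurableSet.iInter fun p => MeasurableSet.iInter fun _ =>
      MeasurableSet.iInter fun q => MeasurableSet.iInter fun _ => ?_
    exact measurableSet_lt ((hx _).dist (hx _)) measurable_const
  have hA_iff : ∀ ω, ω ∈ A ↔ CauchySeq fun k => x (n k) ω := by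
    intro ω
    constructor
    · intro hω
      rw [Metric.cauchySeq_iff]
      intro εc hεc
      obtain ⟨i, hi⟩ := exists_nat_one_div_lt hεc
      have hmem := Set.mem_iInter.1 hω i
      obtain ⟨M, hM⟩ := Set.mem_iUnion.1 hmem
      refine ⟨M, fun a ha b hb => ?_⟩
      have hd := Set.mem_iInter.1 (Set.mem_iInter.1
        (Set.mem_iInter.1 (Set.mem_iInter.1 hM a) ha) b) hb
      exact lt_trans hd hi
    · intro hc
      rw [Metric.cauchySeq_iff] at hc
      refine Set.mem_iInter.2 fun i => ?_
      obtain ⟨M, hM⟩ := hc (1/(i+1)) (by positivity)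
      refine Set.mem_iUnion.2 ⟨M, ?_⟩
      exact Set.mem_iInter.2 fun a => Set.mem_iInter.2 fun ha =>
        Set.mem_iInter.2 fun b => Set.mem_iInter.2 fun hb => hM a ha b hb
  have hA_ae : ∀ᵐ ω ∂P, ω ∈ A := by
    filter_upwards [hae] with ω hω
    rw [eventually_atTop] at hω
    obtain ⟨K, hK⟩ := hω
    rw [hA_iff ω, ← cauchySeq_shift K]
    apply cauchySeq_of_le_geometric (1/2 : ℝ) ((1/2)^(K+1)) (by norm_num)
    intro j
    have hj : ω ∉ E (j + K) := hK (j + K) (Nat.le_add_left _ _)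
    simp only [hE_def, Set.mem_setOf_eq, not_lt] at hj
    have hidx : j + 1 + K = j + K + 1 := by omega
    calc dist (x (n (j + K)) ω) (x (n (j + 1 + K)) ω)
        = dist (x (n (j + K)) ω) (x (n (j + K + 1)) ω) := by rw [hidx]
      _ ≤ (1/2:ℝ)^(j+K+1) := hj
      _ = (1/2:ℝ)^(K+1) * (1/2)^j := by rw [← pow_add]; congr 1; omega
  -- the limit function
  set z : ℕ → Ω → X := fun k ω => if ω ∈ A then x (n k) ω else x (n 0) ω with hz_def
  have hzm : ∀ k, Measurable (z k) := fun k => Measurable.ite hAm (hx _) (hx _)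
  have hzl : ∀ ω, ∃ l, Tendsto (fun k => z k ω) atTop (nhds l) := by
    intro ω
    by_cases hω : ω ∈ A
    · have hc : CauchySeq fun k => z k ω := by
        have hcc := (hA_iff ω).1 hω
        simp only [hz_def, if_pos hω]
        exact hcc
      exact cauchySeq_tendsto_of_complete hc
    · refine ⟨x (n 0) ω, ?_⟩
      have hconst : (fun k => z k ω) = fun _ => x (n 0) ω := by
        funext k; simp only [hz_def, if_neg hω]
      rw [hconst]
      exact tendsto_const_nhds
  choose y hy using hzl
  have hym : Measurable y := measurable_of_tendsto_metrizable hzm (tendsto_pi_nhds.2 hy)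
  have hxy : ∀ᵐ ω ∂P, Tendsto (fun k => x (n k) ω) atTop (nhds (y ω)) := by
    filter_upwards [hA_ae] with ω hω
    have := hy ω
    simp only [hz_def, if_pos hω] at this
    exact this
  have hsub : TendstoInMeasure P (fun k => x (n k)) atTop y :=
    tendstoInMeasure_of_tendsto_ae (fun k => (hx (n k)).aestronglyMeasurable) hxy
  refine ⟨y, hym, ?_⟩
  intro ε hε
  rw [ENNReal.tendsto_atTop_zero]
  intro δ hδ
  obtain ⟨M, hM⟩ := key (ε/2) (half_pos hε) (δ/2) (ENNReal.half_pos hδ.ne').ne'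
  have hsub' := tendstoInMeasure_iff_dist.1 hsub (ε/2) (half_pos hε)
  rw [ENNReal.tendsto_atTop_zero] at hsub'
  obtain ⟨K, hK⟩ := hsub' (δ/2) (ENNReal.half_pos hδ.ne')
  set k0 := max K M with hk0_def
  have hnk0 : M ≤ n k0 := le_trans (le_max_right _ _) hmono.le_apply
  refine ⟨M, fun p hp => ?_⟩
  have hsubset : {ω | ε < dist (x p ω) (y ω)} ⊆
      {ω | ε/2 < dist (x p ω) (x (n k0) ω)} ∪ {ω | ε/2 ≤ dist (x (n k0) ω) (y ω)} := by
    intro ω hω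
    by_contra hcon
    simp only [Set.mem_union, Set.mem_setOf_eq, not_or, not_lt, not_le] at hcon
    simp only [Set.mem_setOf_eq] at hω
    have htri := dist_triangle (x p ω) (x (n k0) ω) (y ω)
    linarith [hcon.1, hcon.2]
  calc P {ω | ε < dist (x p ω) (y ω)}
      ≤ P ({ω | ε/2 < dist (x p ω) (x (n k0) ω)} ∪ {ω | ε/2 ≤ dist (x (n k0) ω) (y ω)}) :=
        measure_mono hsubset
    _ ≤ P {ω | ε/2 < dist (x p ω) (x (n k0) ω)} + P {ω | ε/2 ≤ dist (x (n k0) ω) (y ω)} :=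
        measure_union_le _ _
    _ ≤ δ/2 + δ/2 :=
        add_le_add (le_of_lt (hM p hp (n k0) hnk0)) (hK k0 (le_max_left _ _))
    _ = δ := ENNReal.add_halves δ
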